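/- arXiv:2604.19795 — 2 statements merged into one kernel-verified Lean document; each statement's English description precedes it below -/
import Mathlib

section
/- Hedge (exponential weights) regret bound: for K experts, T rounds, rewards r_j^(t) ∈ [0,1], and weights updated by w_j^(t+1) = w_j^(t)·exp(η·r_j^(t)) with the learner sampling expert j with probability proportional to w_j^(t), the expected cumulative regret against the best fixed expert is at most √(2T·log K) for the choice η = √(2·log K / T). -/
open Real

lemma hedge_exp_chord {a y : ℝ} (h1 : -1 ≤ y) (h2 : y ≤ 1) :
    Real.exp (a * y) ≤ Real.cosh a + y * Real.sinh a := by
  have h := convexOn_exp.2 (Set.mem_univ (-a)) (Set.mem_univ a)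
      (by linarith : (0:ℝ) ≤ (1 - y)/2) (by linarith : (0:ℝ) ≤ (1 + y)/2) (by ring)
  simp only [smul_eq_mul] at h
  calc Real.exp (a * y) = Real.exp ((1-y)/2 * (-a) + (1+y)/2 * a) := by ring_nf
    _ ≤ (1-y)/2 * Real.exp (-a) + (1+y)/2 * Real.exp a := h
    _ = Real.cosh a + y * Real.sinh a := by rw [Real.cosh_eq, Real.sinh_eq]; ring

/-- Hedge regret bound. With `K` experts, `T` rounds, rewards in
`[0,1]`, uniform initial weights, exponential-weight updates
`w_{t+1} j = w_t j * exp (η * r t j)` with `η = √(2 log K / T)`, and the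
learner's expected reward at round `t` being the weight-mixture
`(∑ j, w_t j * r t j) / (∑ j, w_t j)`, the cumulative regret against every
fixed expert is at most `√(2 T log K)`. -/
theorem hedge_regret_bound (K T : ℕ) (hK : 1 ≤ K) (hT : 1 ≤ T)
    (r : ℕ → Fin K → ℝ)
    (hr : ∀ t j, r t j ∈ Set.Icc (0 : ℝ) 1)
    (η : ℝ) (hη : η = Real.sqrt (2 * Real.log K / T))
    (w : ℕ → Fin K → ℝ)
    (hw0 : ∀ j, w 0 j = 1)
    (hwrec : ∀ t j, w (t + 1) j = w t j * Real.exp (η * r t j)) :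
    ∀ j : Fin K,
      (∑ t ∈ Finset.range T, r t j) -
        (∑ t ∈ Finset.range T, (∑ j', w t j' * r t j') / (∑ j', w t j')) ≤
      Real.sqrt (2 * T * Real.log K) := by
  intro j
  haveI : Nonempty (Fin K) := Fin.pos_iff_nonempty.mp (by omega)
  have hwpos : ∀ t j', 0 < w t j' := by
    intro t
    induction t with
    | zero => intro j'; rw [hw0]; norm_num
    | succ n ih => intro j'; rw [hwrec]; exact mul_pos (ih j') (Real.exp_pos _)
  set W : ℕ → ℝ := fun t => ∑ j', w t j' with hW
  have hWpos : ∀ t, 0 < W t := fun t =>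
    Finset.sum_pos (fun j' _ => hwpos t j') Finset.univ_nonempty
  set g : ℕ → ℝ := fun t => (∑ j', w t j' * r t j') / W t with hg
  have hg0 : ∀ t, 0 ≤ g t := fun t =>
    div_nonneg (Finset.sum_nonneg fun j' _ => mul_nonneg (hwpos t j').le (hr t j').1)
      (hWpos t).le
  have hg1 : ∀ t, g t ≤ 1 := by
    intro t
    rw [hg, div_le_one (hWpos t)]
    exact Finset.sum_le_sum fun j' _ => by nlinarith [(hr t j').2, hwpos t j']
  have key : ∀ t, W (t + 1) ≤ W t * Real.exp (η * g t + η^2/2) := by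
    intro t
    have hnum : ∑ j', w t j' * r t j' = g t * W t := by
      rw [hg]; exact (div_mul_cancel₀ _ (hWpos t).ne').symm
    set A := Real.exp (η * g t) with hA
    set c := Real.cosh η with hc
    set s := Real.sinh η with hs
    calc W (t+1) = ∑ j', w t j' * Real.exp (η * r t j') := by
          simp only [hW]; exact Finset.sum_congr rfl fun j' _ => by rw [hwrec]
      _ = ∑ j', w t j' * (A * Real.exp (η * (r t j' - g t))) := by
          refine Finset.sum_congr rfl fun j' _ => ?_
          rw [hA, ← Real.exp_add]; ring_nf
      _ ≤ ∑ j', w t j' * (A * (c + (r t j' - g t) * s)) := by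
          refine Finset.sum_le_sum fun j' _ => ?_
          have hch := hedge_exp_chord (a := η) (y := r t j' - g t)
            (by linarith [(hr t j').1, hg1 t]) (by linarith [(hr t j').2, hg0 t])
          have hw' := (hwpos t j').le
          rw [← hc, ← hs] at hch
          have hwA : (0:ℝ) ≤ w t j' * A := mul_nonneg hw' (Real.exp_pos _).le
          calc w t j' * (A * Real.exp (η * (r t j' - g t)))
              = (w t j' * A) * Real.exp (η * (r t j' - g t)) := by ring
            _ ≤ (w t j' * A) * (c + (r t j' - g t) * s) :=
                mul_le_mul_of_nonneg_left hch hwA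
            _ = w t j' * (A * (c + (r t j' - g t) * s)) := by ring
      _ = (A*c) * W t + ((A*s) * (∑ j', w t j' * r t j') - (A*s*g t) * W t) := by
          rw [hW]
          simp only [Finset.mul_sum]
          rw [← Finset.sum_sub_distrib, ← Finset.sum_add_distrib]
          exact Finset.sum_congr rfl fun j' _ => by ring
      _ = A * (c * W t) := by rw [hnum]; ring
      _ ≤ A * (Real.exp (η^2/2) * W t) := by
          refine mul_le_mul_of_nonneg_left
            (mul_le_mul_of_nonneg_right ?_ (hWpos t).le) (Real.exp_pos _).le
          exact Real.cosh_le_exp_half_sq η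
      _ = W t * Real.exp (η * g t + η^2/2) := by rw [Real.exp_add, hA]; ring
  have hWT : ∀ n, W n ≤ K * Real.exp (η * (∑ t ∈ Finset.range n, g t) + n * η^2/2) := by
    intro n
    induction n with
    | zero => simp [hW, hw0, Finset.card_univ]
    | succ n ih =>
        push_cast
        calc W (n+1) ≤ W n * Real.exp (η * g n + η^2/2) := key n
          _ ≤ (K * Real.exp (η * (∑ t ∈ Finset.range n, g t) + n * η^2/2)) *
                Real.exp (η * g n + η^2/2) :=
              mul_le_mul_of_nonneg_right ih (Real.exp_pos _).le
          _ = K * Real.exp (η * (∑ t ∈ Finset.range (n+1), g t) + (n+1) * η^2/2) := by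
              rw [mul_assoc, ← Real.exp_add]
              congr 2
              rw [Finset.sum_range_succ]
              push_cast; ring
  have hwj : ∀ n, w n j = Real.exp (η * ∑ t ∈ Finset.range n, r t j) := by
    intro n
    induction n with
    | zero => simp [hw0]
    | succ n ih => rw [hwrec, ih, ← Real.exp_add, Finset.sum_range_succ]; ring_nf
  have hlow : w T j ≤ W T :=
    Finset.single_le_sum (fun j' _ => (hwpos T j').le) (Finset.mem_univ j)
  have hKpos : (0:ℝ) < K := by exact_mod_cast hK
  have hmain : η * (∑ t ∈ Finset.range T, r t j) ≤
      Real.log K + η * (∑ t ∈ Finset.range T, g t) + T * η^2/2 := by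
    have h1 : Real.exp (η * ∑ t ∈ Finset.range T, r t j) ≤
        Real.exp (Real.log K + (η * (∑ t ∈ Finset.range T, g t) + T * η^2/2)) := by
      rw [Real.exp_add, Real.exp_log hKpos]
      exact le_trans (hwj T ▸ hlow) (hWT T)
    have := Real.exp_le_exp.mp h1
    linarith
  -- now finish
  rcases eq_or_lt_of_le hK with hK1 | hK2
  · -- K = 1
    subst hK1
    have hj : j = 0 := Subsingleton.elim j 0
    have hgr : ∀ t, g t = r t j := by
      intro t
      simp only [hg, hW, Fin.sum_univ_one, hj]
      exact mul_div_cancel_left₀ _ (hwpos t 0).ne'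
    have heq : (∑ t ∈ Finset.range T, r t j) - (∑ t ∈ Finset.range T, g t) = 0 := by
      rw [sub_eq_zero]; exact Finset.sum_congr rfl fun t _ => (hgr t).symm
    calc (∑ t ∈ Finset.range T, r t j) - (∑ t ∈ Finset.range T, g t) = 0 := heq
      _ ≤ _ := Real.sqrt_nonneg _
  · -- K ≥ 2
    have hL : 0 < Real.log K := Real.log_pos (by exact_mod_cast hK2)
    have hTpos : (0:ℝ) < T := by exact_mod_cast hT
    set L := Real.log K with hLdef
    set s := Real.sqrt (2 * T * L) with hsdef
    have hs2 : s^2 = 2 * T * L := Real.sq_sqrt (by positivity)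
    have hspos : 0 < s := Real.sqrt_pos.mpr (by positivity)
    have hηs : η = s / T := by
      have h1 : (s/(T:ℝ))^2 = 2 * L / T := by field_simp; nlinarith [hs2]
      rw [hη, ← h1, Real.sqrt_sq (by positivity)]
    have hηpos : 0 < η := by rw [hηs]; positivity
    set S := ∑ t ∈ Finset.range T, r t j
    set G := ∑ t ∈ Finset.range T, g t
    have hGb : G ≤ T := by
      calc G ≤ ∑ t ∈ Finset.range T, (1:ℝ) := Finset.sum_le_sum fun t _ => hg1 t
        _ = T := by simp
    show S - G ≤ s
    have h2 : S - G ≤ L/η + T*η/2 := by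
      rw [div_add' _ _ _ hηpos.ne', le_div_iff₀ hηpos]
      nlinarith [hmain]
    rw [hηs] at h2
    have : L/(s/T) + T*(s/T)/2 = s := by
      field_simp
      nlinarith [hs2]
    linarith [this ▸ h2]
end

section
/- Greedy selection under a cardinality constraint for a monotone submodular set function F with F(∅) = 0 achieves F(S_greedy) ≥ (1 − 1/e)·max_{|S|≤k} F(S). -/
open Finset

/-- Greedy selection for a monotone submodular set function `F`
with `F ∅ = 0` under a cardinality constraint `k` achieves a `(1 − 1/e)`
approximation: `F (greedy after k steps) ≥ (1 − 1/e) · F S` for every `S` with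
`|S| ≤ k`. -/
theorem greedy_submodular_approx {M : Type*} [Fintype M] [DecidableEq M]
    (F : Finset M → ℝ)
    (hmono : ∀ S T : Finset M, S ⊆ T → F S ≤ F T)
    (hsubmod : ∀ (S T : Finset M) (x : M), S ⊆ T → x ∉ T →
      F (insert x T) - F T ≤ F (insert x S) - F S)
    (hempty : F ∅ = 0)
    (k : ℕ) (g : ℕ → Finset M)
    (hg0 : g 0 = ∅)
    (hgreedy : ∀ i < k, ∃ x : M,
      g (i + 1) = insert x (g i) ∧
      ∀ y : M, F (insert y (g i)) ≤ F (insert x (g i))) :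
    ∀ S : Finset M, S.card ≤ k →
      (1 - 1 / Real.exp 1) * F S ≤ F (g k) := by
  intro S hS
  rcases Nat.eq_zero_or_pos k with hk | hk
  · subst hk
    have hSe : S = ∅ := Finset.card_eq_zero.mp (Nat.le_zero.mp hS)
    simp [hSe, hempty, hg0]
  have hFS : 0 ≤ F S := hempty ▸ hmono ∅ S (Finset.empty_subset S)
  have hkpos : (0:ℝ) < k := by exact_mod_cast hk
  set c : ℝ := 1 - 1 / (k:ℝ) with hc
  have hc0 : 0 ≤ c := by
    have h1 : 1/(k:ℝ) ≤ 1 := by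
      rw [div_le_one hkpos]; exact_mod_cast hk
    simp only [hc]; linarith
  -- submodular sum bound
  have hsum : ∀ (B A : Finset M), F (B ∪ A) - F B ≤ ∑ x ∈ A, (F (insert x B) - F B) := by
    intro B A
    induction A using Finset.induction_on with
    | empty => simp
    | @insert a A ha ih =>
      rw [Finset.sum_insert ha, Finset.union_insert]
      by_cases haB : a ∈ B ∪ A
      · have he : insert a (B ∪ A) = B ∪ A := Finset.insert_eq_self.mpr haB
        rw [he]
        have h2 : 0 ≤ F (insert a B) - F B := by
          have := hmono B (insert a B) (Finset.subset_insert a B)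
          linarith
        linarith
      · have h1 := hsubmod B (B ∪ A) a Finset.subset_union_left haB
        linarith
  -- one greedy step
  have hstep : ∀ i < k, F S - F (g (i+1)) ≤ c * (F S - F (g i)) := by
    intro i hi
    obtain ⟨x, hx1, hx2⟩ := hgreedy i hi
    have hgsub : g i ⊆ g (i+1) := hx1 ▸ Finset.subset_insert x (g i)
    have hd : 0 ≤ F (g (i+1)) - F (g i) := by
      have := hmono _ _ hgsub; linarith
    have h1 : F S - F (g i) ≤ ∑ y ∈ S, (F (insert y (g i)) - F (g i)) := by
      have hs := hsum (g i) S
      have hm := hmono S (g i ∪ S) Finset.subset_union_right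
      linarith
    have h2 : ∑ y ∈ S, (F (insert y (g i)) - F (g i)) ≤ S.card * (F (g (i+1)) - F (g i)) := by
      have hterm : ∀ y ∈ S, F (insert y (g i)) - F (g i) ≤ F (g (i+1)) - F (g i) := by
        intro y _
        have := hx2 y
        rw [hx1]; linarith
      calc ∑ y ∈ S, (F (insert y (g i)) - F (g i))
          ≤ ∑ _y ∈ S, (F (g (i+1)) - F (g i)) := Finset.sum_le_sum hterm
        _ = S.card * (F (g (i+1)) - F (g i)) := by rw [Finset.sum_const, nsmul_eq_mul]
    have h3 : (S.card : ℝ) * (F (g (i+1)) - F (g i)) ≤ (k:ℝ) * (F (g (i+1)) - F (g i)) := by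
      apply mul_le_mul_of_nonneg_right _ hd
      exact_mod_cast hS
    have h4 : F S - F (g i) ≤ (k:ℝ) * (F (g (i+1)) - F (g i)) := by linarith
    have h5 : (F S - F (g i)) / k ≤ F (g (i+1)) - F (g i) := by
      rw [div_le_iff₀ hkpos]
      nlinarith
    have hexp : c * (F S - F (g i)) = (F S - F (g i)) - (F S - F (g i)) / k := by
      rw [hc]; ring
    rw [hexp]
    linarith
  -- iterate
  have hiter : ∀ i, i ≤ k → F S - F (g i) ≤ c ^ i * F S := by
    intro i
    induction i with
    | zero => intro _; simp [hg0, hempty]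
    | succ n ih =>
      intro hn
      have hn' : n < k := hn
      have h1 := hstep n hn'
      have h2 := ih (Nat.le_of_lt hn')
      have h3 : c * (F S - F (g n)) ≤ c * (c ^ n * F S) :=
        mul_le_mul_of_nonneg_left h2 hc0
      calc F S - F (g (n+1)) ≤ c * (F S - F (g n)) := h1
        _ ≤ c * (c ^ n * F S) := h3
        _ = c ^ (n+1) * F S := by ring
  have hfin := hiter k le_rfl
  -- c^k ≤ exp(-1)
  have hce : c ≤ Real.exp (-(1/(k:ℝ))) := by
    have := Real.add_one_le_exp (-(1/(k:ℝ)))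
    simp only [hc]; linarith
  have hck : c ^ k ≤ Real.exp (-1) := by
    calc c ^ k ≤ (Real.exp (-(1/(k:ℝ)))) ^ k := pow_le_pow_left₀ hc0 hce k
      _ = Real.exp ((k:ℝ) * (-(1/(k:ℝ)))) := by rw [← Real.exp_nat_mul]
      _ = Real.exp (-1) := by
          congr 1
          field_simp
  have hfinal : c ^ k * F S ≤ Real.exp (-1) * F S :=
    mul_le_mul_of_nonneg_right hck hFS
  have hexpneg : Real.exp (-1) = 1 / Real.exp 1 := by
    rw [Real.exp_neg]; ring
  rw [hexpneg] at hfinal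
  linarith
end
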